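/- For every real κ with 0 < κ < 1 and every real h ≥ 1, the 3×3 real symmetric matrix [[1, κ^2(h+2)/(2(h+1)), κ^2], [κ^2(h+2)/(2(h+1)), κ^2(2h+2)/(2(2h+1)), κ^2/2], [κ^2, κ^2/2, κ^2]] is positive semidefinite if and only if κ^2 ≤ G(h) := (2h^3+7h^2+8h+3)/(2h^3+7h^2+10h+4). -/

import Mathlib

set_option maxHeartbeats 1600000


/-- `G(h) = (2h³+7h²+8h+3)/(2h³+7h²+10h+4)`. -/
noncomputable def GCY (h : ℝ) : ℝ :=
  (2 * h ^ 3 + 7 * h ^ 2 + 8 * h + 3) / (2 * h ^ 3 + 7 * h ^ 2 + 10 * h + 4)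

theorem sixPointTest_matrix_posSemidef_iff (κ h : ℝ) (hκ0 : 0 < κ) (hκ1 : κ < 1)
    (hh : 1 ≤ h) :
    (Matrix.PosSemidef
      !![1, κ ^ 2 * (h + 2) / (2 * (h + 1)), κ ^ 2;
         κ ^ 2 * (h + 2) / (2 * (h + 1)), κ ^ 2 * (2 * h + 2) / (2 * (2 * h + 1)), κ ^ 2 / 2;
         κ ^ 2, κ ^ 2 / 2, κ ^ 2])
      ↔ κ ^ 2 ≤ GCY h := by
  set t : ℝ := κ ^ 2 with hTdef
  have ht0 : 0 < t := by positivity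
  have ht1 : t < 1 := by nlinarith
  have hh1 : (0:ℝ) < h + 1 := by linarith
  have hh2 : (0:ℝ) < 2 * h + 1 := by linarith
  set N : ℝ := (h + 1) ^ 2 * (2 * h + 1) with hNdef
  have hN : 0 < N := by positivity
  set A : ℝ := 4 * t * (h + 1) ^ 3 - t ^ 2 * (h + 2) ^ 2 * (2 * h + 1) with hAdef
  have hA : 0 < A := by
    nlinarith [mul_pos ht0 (show (0:ℝ) < 2 * h ^ 3 + 3 * h ^ 2 by nlinarith),
      mul_nonneg (mul_nonneg ht0.le (by linarith : (0:ℝ) ≤ 1 - t))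
        (by positivity : (0:ℝ) ≤ (h + 2) ^ 2 * (2 * h + 1))]
  set B : ℝ := t * (h + 1) - t ^ 2 * (h + 2) with hBdef
  have hGden : (0:ℝ) < 2 * h ^ 3 + 7 * h ^ 2 + 10 * h + 4 := by nlinarith
  have hGiff : (t ≤ GCY h) ↔ t * (2 * h ^ 3 + 7 * h ^ 2 + 10 * h + 4) ≤
      2 * h ^ 3 + 7 * h ^ 2 + 8 * h + 3 := by
    rw [GCY, le_div_iff₀ hGden]
  rw [hGiff]
  have hdot : ∀ x : Fin 3 → ℝ,
      dotProduct (star x)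
        ((!![1, t * (h + 2) / (2 * (h + 1)), t;
             t * (h + 2) / (2 * (h + 1)), t * (2 * h + 2) / (2 * (2 * h + 1)), t / 2;
             t, t / 2, t]).mulVec x)
      = x 0 * x 0 + 2 * (t * (h + 2) / (2 * (h + 1))) * x 0 * x 1 + 2 * t * x 0 * x 2
        + (t * (2 * h + 2) / (2 * (2 * h + 1))) * x 1 * x 1 + t * x 1 * x 2
        + t * x 2 * x 2 := by
    intro x
    simp [Matrix.mulVec, dotProduct, Fin.sum_univ_three]
    ring
  rw [Matrix.posSemidef_iff_dotProduct_mulVec]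
  constructor
  · rintro ⟨-, hq⟩
    set a0 : ℝ := 2 * t * (h + 2) * (h + 1) * (2 * h + 1) * B - 2 * t * (h + 1) * A with ha0
    set b0 : ℝ := -(4 * N * B) with hb0
    set c0 : ℝ := 2 * (h + 1) * A with hc0
    have h1 := hq ![a0, b0, c0]
    rw [hdot] at h1
    simp only [Matrix.cons_val_zero, Matrix.cons_val_one, Matrix.head_cons,
      Matrix.cons_val_two, Matrix.tail_cons] at h1
    have hwit : a0 * a0 + 2 * (t * (h + 2) / (2 * (h + 1))) * a0 * b0 + 2 * t * a0 * c0
        + (t * (2 * h + 2) / (2 * (2 * h + 1))) * b0 * b0 + t * b0 * c0 + t * c0 * c0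
        = (4 * (h + 1) ^ 2 * A * t ^ 2) *
            ((2 * h ^ 3 + 7 * h ^ 2 + 8 * h + 3) -
              t * (2 * h ^ 3 + 7 * h ^ 2 + 10 * h + 4)) := by
      rw [ha0, hb0, hc0, hAdef, hBdef, hNdef]
      field_simp
      ring
    rw [hwit] at h1
    have hpos : 0 < 4 * (h + 1) ^ 2 * A * t ^ 2 := by positivity
    have hX : (0:ℝ) ≤ (2 * h ^ 3 + 7 * h ^ 2 + 8 * h + 3) -
        t * (2 * h ^ 3 + 7 * h ^ 2 + 10 * h + 4) :=
      le_of_mul_le_mul_left (by simpa using h1) hpos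
    linarith
  · intro hG
    refine ⟨?_, ?_⟩
    · show _ = _
      ext i j
      fin_cases i <;> fin_cases j <;>
        simp [Matrix.conjTranspose_apply]
    · intro x
      rw [hdot]
      set a : ℝ := x 0
      set b : ℝ := x 1
      set c : ℝ := x 2
      set u : ℝ := 2 * (h + 1) * a + t * (h + 2) * b + 2 * t * (h + 1) * c with hu
      set v : ℝ := A * b + 2 * B * (h + 1) * (2 * h + 1) * c with hv
      have hm : 16 * N * A *
          (a * a + 2 * (t * (h + 2) / (2 * (h + 1))) * a * b + 2 * t * a * c
            + (t * (2 * h + 2) / (2 * (2 * h + 1))) * b * b + t * b * c + t * c * c)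
          = 4 * A * (2 * h + 1) * u ^ 2 + 4 * v ^ 2
            + 16 * N * t ^ 2 *
              ((2 * h ^ 3 + 7 * h ^ 2 + 8 * h + 3) -
                t * (2 * h ^ 3 + 7 * h ^ 2 + 10 * h + 4)) * c ^ 2 := by
        rw [hu, hv, hAdef, hBdef, hNdef]
        field_simp
        ring
      have hrhs : 0 ≤ 4 * A * (2 * h + 1) * u ^ 2 + 4 * v ^ 2
            + 16 * N * t ^ 2 *
              ((2 * h ^ 3 + 7 * h ^ 2 + 8 * h + 3) -
                t * (2 * h ^ 3 + 7 * h ^ 2 + 10 * h + 4)) * c ^ 2 := by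
        have h1 : 0 ≤ 4 * A * (2 * h + 1) * u ^ 2 := by positivity
        have h2 : 0 ≤ 4 * v ^ 2 := by positivity
        have h3 : 0 ≤ 16 * N * t ^ 2 *
              ((2 * h ^ 3 + 7 * h ^ 2 + 8 * h + 3) -
                t * (2 * h ^ 3 + 7 * h ^ 2 + 10 * h + 4)) * c ^ 2 := by
          have : 0 ≤ (2 * h ^ 3 + 7 * h ^ 2 + 8 * h + 3) -
                t * (2 * h ^ 3 + 7 * h ^ 2 + 10 * h + 4) := by linarith
          positivity
        linarith
      rw [← hm] at hrhs
      have h16 : 0 < 16 * N * A := by positivity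
      exact le_of_mul_le_mul_left (by simpa using hrhs) h16
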